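/- Let r₀ := (4ρ)^{−1} and for γ ∈ Γ with ‖γ‖_Γ ≤ r₀ let x(γ) denote the unique solution of x = G_γ(x) in the closed ball {x ∈ X : ‖x‖_X ≤ 2r₀}. Then the map γ ↦ x(γ) is continuous on {γ ∈ Γ : ‖γ‖_Γ ≤ r₀}; more precisely, ‖x(γ) − x(γ̃)‖_X ≤ 2‖γ − γ̃‖_Γ for all γ, γ̃ in this ball. -/

import Mathlib

open MeasureTheory Complex Real Filter Set

noncomputable section

/-- Lebesgue measure on the interval `(0, 1)`. -/
def mu01 : Measure ℝ := volume.restrict (Set.Ioo (0 : ℝ) 1)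

/-- `convPow conv x k` is the `(k+1)`-fold convolution power `x^{∗(k+1)}`. -/
def convPow {X : Type*} (conv : X → X → X) (x : X) : ℕ → X
  | 0 => x
  | k + 1 => conv x (convPow conv x k)

/-- The Γ-norm `‖γ‖_Γ = ‖a₀‖ + Σ_{k≥1} ‖a_k‖/(k-1)!` of a sequence `γ = (a_k)_{k≥0}`. -/
def gammaNorm {X : Type*} [NormedAddCommGroup X] (a : ℕ → X) : ℝ :=
  ‖a 0‖ + ∑' k : ℕ, ‖a (k + 1)‖ / (Nat.factorial k : ℝ)

/-- The nonlinear map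
`G_γ(x) = Σ_{k≥1} (-1)^k x^{∗(2k+1)}/(2k+1)! - a₀ - Σ_{k≥1} a_k ∗ x^{∗k}/k!`. -/
def Gmap {X : Type*} [NormedAddCommGroup X] [NormedSpace ℂ X]
    (conv : X → X → X) (a : ℕ → X) (x : X) : X :=
  (∑' k : ℕ, (((-1 : ℂ) ^ (k + 1)) / (Nat.factorial (2 * k + 3) : ℂ)) • convPow conv x (2 * k + 2))
    - a 0 - ∑' k : ℕ, ((Nat.factorial (k + 1) : ℂ))⁻¹ • conv (a (k + 1)) (convPow conv x k)

section Aux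

variable {X : Type*} [NormedAddCommGroup X] [NormedSpace ℂ X]

/-- Norm bound for convolution powers. -/
lemma convPow_norm_le_aux (conv : X →ₗ[ℂ] X →ₗ[ℂ] X) {ρ M : ℝ}
    (hbound : ∀ f g : X, ‖conv f g‖ ≤ ρ * ‖f‖ * ‖g‖) (hρ : 0 ≤ ρ) (hM : 0 ≤ M)
    {x : X} (hx : ‖x‖ ≤ M) :
    ∀ n, ‖convPow (fun u v => conv u v) x n‖ ≤ (ρ * M) ^ n * M
  | 0 => by simpa [convPow] using hx
  | n + 1 => by
    have ih := convPow_norm_le_aux conv hbound hρ hM hx n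
    have h1 := hbound x (convPow (fun u v => conv u v) x n)
    have hP : (0:ℝ) ≤ ‖convPow (fun u v => conv u v) x n‖ := norm_nonneg _
    calc ‖convPow (fun u v => conv u v) x (n + 1)‖
        = ‖conv x (convPow (fun u v => conv u v) x n)‖ := rfl
      _ ≤ ρ * ‖x‖ * ‖convPow (fun u v => conv u v) x n‖ := h1
      _ ≤ ρ * M * ((ρ * M) ^ n * M) := by
          apply mul_le_mul (by nlinarith) ih hP (by positivity)
      _ = (ρ * M) ^ (n + 1) * M := by ring

/-- Lipschitz bound for convolution powers. -/
lemma convPow_sub_le_aux (conv : X →ₗ[ℂ] X →ₗ[ℂ] X) {ρ M : ℝ}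
    (hbound : ∀ f g : X, ‖conv f g‖ ≤ ρ * ‖f‖ * ‖g‖) (hρ : 0 ≤ ρ) (hM : 0 ≤ M)
    {x y : X} (hx : ‖x‖ ≤ M) (hy : ‖y‖ ≤ M) :
    ∀ n, ‖convPow (fun u v => conv u v) x n - convPow (fun u v => conv u v) y n‖
      ≤ ((n : ℝ) + 1) * (ρ * M) ^ n * ‖x - y‖
  | 0 => by simp [convPow]
  | n + 1 => by
    set F : X → X → X := fun u v => conv u v with hF
    have ih := convPow_sub_le_aux conv hbound hρ hM hx hy n
    have hid : convPow F x (n + 1) - convPow F y (n + 1)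
        = conv (x - y) (convPow F x n) + conv y (convPow F x n - convPow F y n) := by
      show conv x (convPow F x n) - conv y (convPow F y n) = _
      simp only [map_sub, LinearMap.sub_apply]
      abel
    have h1 : ‖conv (x - y) (convPow F x n)‖ ≤ ρ * ‖x - y‖ * ((ρ * M) ^ n * M) := by
      refine le_trans (hbound _ _) ?_
      have := convPow_norm_le_aux conv hbound hρ hM hx n
      have h0 : (0:ℝ) ≤ ρ * ‖x - y‖ := by positivity
      nlinarith [norm_nonneg (convPow F x n)]
    have h2 : ‖conv y (convPow F x n - convPow F y n)‖
        ≤ ρ * M * (((n : ℝ) + 1) * (ρ * M) ^ n * ‖x - y‖) := by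
      refine le_trans (hbound _ _) ?_
      have hny : (0:ℝ) ≤ ‖y‖ := norm_nonneg _
      have hnd : (0:ℝ) ≤ ‖convPow F x n - convPow F y n‖ := norm_nonneg _
      apply mul_le_mul (by nlinarith) ih hnd (by positivity)
    calc ‖convPow F x (n + 1) - convPow F y (n + 1)‖
        = ‖conv (x - y) (convPow F x n) + conv y (convPow F x n - convPow F y n)‖ := by
          rw [hid]
      _ ≤ ‖conv (x - y) (convPow F x n)‖ + ‖conv y (convPow F x n - convPow F y n)‖ :=
          norm_add_le _ _
      _ ≤ ρ * ‖x - y‖ * ((ρ * M) ^ n * M)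
          + ρ * M * (((n : ℝ) + 1) * (ρ * M) ^ n * ‖x - y‖) := add_le_add h1 h2
      _ = (((n : ℕ) + 1 : ℝ) + 1) * (ρ * M) ^ (n + 1) * ‖x - y‖ := by ring
      _ = (((n + 1 : ℕ) : ℝ) + 1) * (ρ * M) ^ (n + 1) * ‖x - y‖ := by push_cast; ring

end Aux

set_option maxHeartbeats 1000000 in
/-- **Continuity of the fixed point.** With `r₀ = (4ρ)⁻¹`, the solution `x(γ)` of
`x = G_γ(x)` in the ball `{‖x‖ ≤ 2r₀}` depends continuously on `γ ∈ B_Γ(r₀)`; more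
precisely, `‖x(γ) - x(γ̃)‖ ≤ 2‖γ - γ̃‖_Γ`. -/
theorem Gmap_fixed_point_continuous
    {X : Type*} [NormedAddCommGroup X] [NormedSpace ℂ X] [CompleteSpace X]
    -- `X` is continuously embedded in `L¹(0,1)`
    (ι : X →L[ℂ] Lp ℂ 1 mu01) (hι : Function.Injective ι)
    -- `X` is an algebra with respect to cyclic convolution
    (conv : X →ₗ[ℂ] X →ₗ[ℂ] X)
    (hconv : ∀ f g : X, (ι (conv f g) : ℝ → ℂ)
      =ᵐ[mu01] fun x => ∫ t, (ι f : ℝ → ℂ) (Int.fract (x - t)) * (ι g : ℝ → ℂ) t ∂mu01)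
    (ρ : ℝ) (hρ : 0 < ρ) (hbound : ∀ f g : X, ‖conv f g‖ ≤ ρ * ‖f‖ * ‖g‖)
    -- `γ = (a_k)` and `γ̃ = (b_k)` in `Γ` with norms `≤ r₀ = (4ρ)⁻¹`
    (a b : ℕ → X)
    (ha : Summable (fun k : ℕ => ‖a (k + 1)‖ / (Nat.factorial k : ℝ)))
    (hb : Summable (fun k : ℕ => ‖b (k + 1)‖ / (Nat.factorial k : ℝ)))
    (hγa : gammaNorm a ≤ (4 * ρ)⁻¹) (hγb : gammaNorm b ≤ (4 * ρ)⁻¹)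
    -- `x` and `y` are the corresponding fixed points in the ball `{‖·‖ ≤ 2r₀}`
    (x y : X)
    (hx : ‖x‖ ≤ 2 * (4 * ρ)⁻¹ ∧ x = Gmap (fun u v => conv u v) a x)
    (hy : ‖y‖ ≤ 2 * (4 * ρ)⁻¹ ∧ y = Gmap (fun u v => conv u v) b y) :
    ‖x - y‖ ≤ 2 * gammaNorm (fun k => a k - b k) := by
  obtain ⟨hxM, hxe⟩ := hx
  obtain ⟨hyM, hye⟩ := hy
  set F : X → X → X := fun u v => conv u v with hF
  set M : ℝ := 2 * (4 * ρ)⁻¹ with hMdef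
  have hρ0 : (0:ℝ) ≤ ρ := hρ.le
  have hM0 : (0:ℝ) ≤ M := by positivity
  have hc : ρ * M = 1 / 2 := by
    rw [hMdef]; field_simp; ring
  set δ : ℝ := ‖x - y‖ with hδdef
  have hδ0 : (0:ℝ) ≤ δ := norm_nonneg _
  -- the series appearing in `Gmap`
  set f1 : X → ℕ → X := fun z k =>
    (((-1 : ℂ) ^ (k + 1)) / (Nat.factorial (2 * k + 3) : ℂ)) • convPow F z (2 * k + 2) with hf1
  set f2 : (ℕ → X) → X → ℕ → X := fun c z k =>
    ((Nat.factorial (k + 1) : ℂ))⁻¹ • conv (c (k + 1)) (convPow F z k) with hf2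
  set t1 : ℕ → X := fun k =>
    ((Nat.factorial (k + 1) : ℂ))⁻¹ • conv (a (k + 1) - b (k + 1)) (convPow F x k) with ht1
  set t2 : ℕ → X := fun k =>
    ((Nat.factorial (k + 1) : ℂ))⁻¹ • conv (b (k + 1)) (convPow F x k - convPow F y k) with ht2
  -- basic norm computations
  have hP : ∀ (z : X), ‖z‖ ≤ M → ∀ n, ‖convPow F z n‖ ≤ (1/2 : ℝ) ^ n * M := by
    intro z hz n
    have := convPow_norm_le_aux conv hbound hρ0 hM0 hz n
    rwa [hc] at this
  have hPd : ∀ n, ‖convPow F x n - convPow F y n‖ ≤ ((n : ℝ) + 1) * (1/2 : ℝ) ^ n * δ := by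
    intro n
    have := convPow_sub_le_aux conv hbound hρ0 hM0 hxM hyM n
    rwa [hc] at this
  have hfact1 : ∀ k : ℕ, (1:ℝ) ≤ (Nat.factorial k : ℝ) := by
    intro k; exact_mod_cast Nat.one_le_iff_ne_zero.mpr (Nat.factorial_ne_zero k)
  -- key per-term estimate for the `f2`-type terms
  have aux2 : ∀ (c z : X), ‖z‖ ≤ M → ∀ k : ℕ,
      ‖((Nat.factorial (k + 1) : ℂ))⁻¹ • conv c (convPow F z k)‖
        ≤ (1/2) * (‖c‖ / (Nat.factorial k : ℝ)) := by
    intro c z hz k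
    have hn : ‖((Nat.factorial (k + 1) : ℂ))⁻¹ • conv c (convPow F z k)‖
        = ((Nat.factorial (k + 1) : ℝ))⁻¹ * ‖conv c (convPow F z k)‖ := by
      rw [norm_smul]; simp
    rw [hn]
    have h1 : ‖conv c (convPow F z k)‖ ≤ ρ * ‖c‖ * ((1/2:ℝ) ^ k * M) := by
      refine le_trans (hbound _ _) ?_
      have := hP z hz k
      have h0 : (0:ℝ) ≤ ρ * ‖c‖ := by positivity
      nlinarith [norm_nonneg (convPow F z k)]
    have h2 : ρ * ‖c‖ * ((1/2:ℝ) ^ k * M) = ‖c‖ * (1/2:ℝ) ^ k * (ρ * M) := by ring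
    have h3 : ‖conv c (convPow F z k)‖ ≤ ‖c‖ * (1/2:ℝ) ^ k * (1/2) := by
      have h4 := h1.trans_eq h2
      rwa [hc] at h4
    calc ((Nat.factorial (k + 1) : ℝ))⁻¹ * ‖conv c (convPow F z k)‖
        ≤ ((Nat.factorial k : ℝ))⁻¹ * (‖c‖ * (1/2:ℝ) ^ k * (1/2)) := by
          apply mul_le_mul _ h3 (norm_nonneg _) (by positivity)
          apply inv_anti₀ (by positivity)
          exact_mod_cast Nat.factorial_le (Nat.le_succ k)
      _ ≤ ((Nat.factorial k : ℝ))⁻¹ * (‖c‖ * 1 * (1/2)) := by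
          gcongr
          exact pow_le_one₀ (by norm_num) (by norm_num)
      _ = (1/2) * (‖c‖ / (Nat.factorial k : ℝ)) := by
          rw [div_eq_mul_inv]; ring
  -- per-term estimates
  have key1 : ∀ k : ℕ, ‖f1 x k - f1 y k‖ ≤ (δ/8) * (1/2:ℝ) ^ k := by
    intro k
    have hid : f1 x k - f1 y k
        = (((-1 : ℂ) ^ (k + 1)) / (Nat.factorial (2 * k + 3) : ℂ)) •
            (convPow F x (2 * k + 2) - convPow F y (2 * k + 2)) := by
      rw [hf1]; simp [smul_sub]
    rw [hid, norm_smul]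
    have hns : ‖((-1 : ℂ) ^ (k + 1)) / (Nat.factorial (2 * k + 3) : ℂ)‖
        = ((Nat.factorial (2 * k + 3) : ℝ))⁻¹ := by simp
    rw [hns]
    have hfs : (Nat.factorial (2 * k + 3) : ℝ)
        = ((2 * k + 3 : ℕ) : ℝ) * (Nat.factorial (2 * k + 2) : ℝ) := by
      rw [show 2 * k + 3 = (2 * k + 2) + 1 by omega, Nat.factorial_succ]; push_cast; ring
    have hd := hPd (2 * k + 2)
    have hfge : (2:ℝ) ≤ (Nat.factorial (2 * k + 2) : ℝ) := by
      have h := Nat.factorial_le (show 2 ≤ 2 * k + 2 by omega)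
      have h2 : Nat.factorial 2 = 2 := rfl
      rw [h2] at h
      exact_mod_cast h
    have hpow : (1/2:ℝ) ^ (2 * k + 2) ≤ (1/2:ℝ) ^ k * (1/4) := by
      have he2 : (1/2:ℝ) ^ (2 * k + 2) = (1/2:ℝ) ^ k * ((1/2:ℝ) ^ (k + 2)) := by
        rw [← pow_add]; congr 1; omega
      rw [he2]
      have h1 : (1/2:ℝ) ^ (k + 2) ≤ (1/4 : ℝ) := by
        have h2 := pow_le_pow_of_le_one (show (0:ℝ) ≤ 1/2 by norm_num)
          (by norm_num) (show 2 ≤ k + 2 by omega)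
        norm_num at h2
        linarith
      gcongr
    -- ‖diff‖ ≤ (2k+3) (1/2)^{2k+2} δ, scalar = 1/((2k+3)(2k+2)!)
    have hcalc : ((Nat.factorial (2 * k + 3) : ℝ))⁻¹ *
        ‖convPow F x (2 * k + 2) - convPow F y (2 * k + 2)‖
        ≤ ((Nat.factorial (2 * k + 3) : ℝ))⁻¹ * (((2 * k + 2 : ℕ) : ℝ) + 1) *
            ((1/2:ℝ) ^ (2 * k + 2) * δ) := by
      have h0 : (0:ℝ) ≤ ((Nat.factorial (2 * k + 3) : ℝ))⁻¹ := by positivity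
      calc ((Nat.factorial (2 * k + 3) : ℝ))⁻¹ *
          ‖convPow F x (2 * k + 2) - convPow F y (2 * k + 2)‖
          ≤ ((Nat.factorial (2 * k + 3) : ℝ))⁻¹ *
              ((((2 * k + 2 : ℕ) : ℝ) + 1) * (1/2:ℝ) ^ (2 * k + 2) * δ) :=
            mul_le_mul_of_nonneg_left hd h0
        _ = ((Nat.factorial (2 * k + 3) : ℝ))⁻¹ * (((2 * k + 2 : ℕ) : ℝ) + 1) *
              ((1/2:ℝ) ^ (2 * k + 2) * δ) := by ring
    refine le_trans hcalc ?_
    have hscal : ((Nat.factorial (2 * k + 3) : ℝ))⁻¹ * (((2 * k + 2 : ℕ) : ℝ) + 1)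
        = ((Nat.factorial (2 * k + 2) : ℝ))⁻¹ := by
      have h3 : (0:ℝ) < ((2 * k + 3 : ℕ) : ℝ) := by positivity
      have hcast : (((2 * k + 2 : ℕ) : ℝ) + 1) = ((2 * k + 3 : ℕ) : ℝ) := by push_cast; ring
      rw [hfs, hcast, mul_inv, mul_comm (((2 * k + 3 : ℕ) : ℝ))⁻¹, mul_assoc,
        inv_mul_cancel₀ h3.ne', mul_one]
    rw [hscal]
    have hinv : ((Nat.factorial (2 * k + 2) : ℝ))⁻¹ ≤ 1/2 := by
      rw [inv_le_comm₀ (by positivity) (by norm_num)]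
      linarith
    calc ((Nat.factorial (2 * k + 2) : ℝ))⁻¹ * ((1/2:ℝ) ^ (2 * k + 2) * δ)
        ≤ (1/2) * (((1/2:ℝ) ^ k * (1/4)) * δ) := by
          apply mul_le_mul hinv _ (by positivity) (by norm_num)
          exact mul_le_mul_of_nonneg_right hpow hδ0
      _ = (δ/8) * (1/2:ℝ) ^ k := by ring
  have keyt1 : ∀ k : ℕ, ‖t1 k‖ ≤ (1/2) * (‖a (k+1) - b (k+1)‖ / (Nat.factorial k : ℝ)) :=
    fun k => aux2 _ x hxM k
  have keyt2 : ∀ k : ℕ, ‖t2 k‖ ≤ (ρ * δ) * (‖b (k+1)‖ / (Nat.factorial k : ℝ)) := by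
    intro k
    have hn : ‖t2 k‖ = ((Nat.factorial (k + 1) : ℝ))⁻¹ *
        ‖conv (b (k + 1)) (convPow F x k - convPow F y k)‖ := by
      rw [ht2]; rw [norm_smul]; simp
    rw [hn]
    have h1 : ‖conv (b (k + 1)) (convPow F x k - convPow F y k)‖
        ≤ ρ * ‖b (k+1)‖ * (((k : ℝ) + 1) * (1/2:ℝ) ^ k * δ) := by
      refine le_trans (hbound _ _) ?_
      have := hPd k
      have h0 : (0:ℝ) ≤ ρ * ‖b (k+1)‖ := by positivity
      nlinarith [norm_nonneg (convPow F x k - convPow F y k)]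
    have hfs : (Nat.factorial (k + 1) : ℝ) = ((k:ℝ) + 1) * (Nat.factorial k : ℝ) := by
      rw [Nat.factorial_succ]; push_cast; ring
    calc ((Nat.factorial (k + 1) : ℝ))⁻¹ *
        ‖conv (b (k + 1)) (convPow F x k - convPow F y k)‖
        ≤ ((Nat.factorial (k + 1) : ℝ))⁻¹ *
            (ρ * ‖b (k+1)‖ * (((k : ℝ) + 1) * (1/2:ℝ) ^ k * δ)) :=
          mul_le_mul_of_nonneg_left h1 (by positivity)
      _ = (ρ * δ) * (‖b (k+1)‖ / (Nat.factorial k : ℝ)) * (1/2:ℝ) ^ k := by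
          have hk1 : ((k:ℝ) + 1) ≠ 0 := by positivity
          calc ((Nat.factorial (k + 1) : ℝ))⁻¹ *
              (ρ * ‖b (k+1)‖ * (((k : ℝ) + 1) * (1/2:ℝ) ^ k * δ))
              = (((k:ℝ) + 1)⁻¹ * ((k:ℝ) + 1)) *
                  ((ρ * δ) * (‖b (k+1)‖ / (Nat.factorial k : ℝ)) * (1/2:ℝ) ^ k) := by
                rw [hfs, mul_inv, div_eq_mul_inv]; ring
            _ = (ρ * δ) * (‖b (k+1)‖ / (Nat.factorial k : ℝ)) * (1/2:ℝ) ^ k := by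
                rw [inv_mul_cancel₀ hk1, one_mul]
      _ ≤ (ρ * δ) * (‖b (k+1)‖ / (Nat.factorial k : ℝ)) * 1 := by
          gcongr
          exact pow_le_one₀ (by norm_num) (by norm_num)
      _ = (ρ * δ) * (‖b (k+1)‖ / (Nat.factorial k : ℝ)) := by ring
  -- summability
  have hgeo : Summable (fun k : ℕ => (1/2:ℝ) ^ k) :=
    summable_geometric_of_lt_one (by norm_num) (by norm_num)
  have hΔ : Summable (fun k : ℕ => ‖a (k+1) - b (k+1)‖ / (Nat.factorial k : ℝ)) := by
    apply Summable.of_nonneg_of_le (fun k => by positivity) _ (ha.add hb)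
    intro k
    calc ‖a (k+1) - b (k+1)‖ / (Nat.factorial k : ℝ)
        ≤ (‖a (k+1)‖ + ‖b (k+1)‖) / (Nat.factorial k : ℝ) := by
          gcongr; exact norm_sub_le _ _
      _ = ‖a (k+1)‖ / (Nat.factorial k : ℝ) + ‖b (k+1)‖ / (Nat.factorial k : ℝ) :=
          add_div _ _ _
  have hs1 : ∀ (z : X), ‖z‖ ≤ M → Summable (f1 z) := by
    intro z hz
    apply Summable.of_norm_bounded (hgeo.mul_right M)
    intro k
    have hn : ‖f1 z k‖ = ((Nat.factorial (2 * k + 3) : ℝ))⁻¹ * ‖convPow F z (2 * k + 2)‖ := by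
      rw [hf1]; rw [norm_smul]; simp
    rw [hn]
    have h1 := hP z hz (2 * k + 2)
    have hinv : ((Nat.factorial (2 * k + 3) : ℝ))⁻¹ ≤ 1 := by
      rw [inv_le_one_iff₀]; right; exact hfact1 _
    have hp : (1/2:ℝ) ^ (2 * k + 2) ≤ (1/2:ℝ) ^ k :=
      pow_le_pow_of_le_one (by norm_num) (by norm_num) (by omega)
    have h0 : (0:ℝ) ≤ ‖convPow F z (2 * k + 2)‖ := norm_nonneg _
    have h2 : ‖convPow F z (2 * k + 2)‖ ≤ (1/2:ℝ) ^ k * M :=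
      h1.trans (mul_le_mul_of_nonneg_right hp hM0)
    calc ((Nat.factorial (2 * k + 3) : ℝ))⁻¹ * ‖convPow F z (2 * k + 2)‖
        ≤ 1 * ((1/2:ℝ) ^ k * M) := mul_le_mul hinv h2 h0 zero_le_one
      _ = (1/2:ℝ) ^ k * M := one_mul _
  have hs2 : ∀ (c : ℕ → X), Summable (fun k : ℕ => ‖c (k + 1)‖ / (Nat.factorial k : ℝ)) →
      ∀ (z : X), ‖z‖ ≤ M → Summable (fun k => ((Nat.factorial (k + 1) : ℂ))⁻¹ •
        conv (c (k + 1)) (convPow F z k)) := by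
    intro c hc' z hz
    apply Summable.of_norm_bounded (hc'.mul_left (1/2))
    intro k
    exact aux2 (c (k+1)) z hz k
  have hst1 : Summable t1 :=
    Summable.of_norm_bounded (hΔ.mul_left (1/2)) keyt1
  have hst2 : Summable t2 :=
    Summable.of_norm_bounded (hb.mul_left (ρ * δ)) keyt2
  have hs2a : Summable (f2 a x) := hs2 a ha x hxM
  have hs2b : Summable (f2 b y) := hs2 b hb y hyM
  have hs1x : Summable (f1 x) := hs1 x hxM
  have hs1y : Summable (f1 y) := hs1 y hyM
  -- the decomposition of x - y
  have hsplit : (∑' k, f2 a x k) - (∑' k, f2 b y k) = (∑' k, t1 k) + (∑' k, t2 k) := by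
    rw [← Summable.tsum_sub hs2a hs2b, ← Summable.tsum_add hst1 hst2]
    congr 1; funext k
    rw [hf2, ht1, ht2]
    simp only [map_sub, LinearMap.sub_apply, smul_sub, smul_add]
    abel
  have hxy : x - y = ((∑' k, f1 x k) - (∑' k, f1 y k)) - (a 0 - b 0)
      - ((∑' k, f2 a x k) - (∑' k, f2 b y k)) := by
    have e1 : x - y = Gmap F a x - Gmap F b y := by rw [← hxe, ← hye]
    rw [e1]
    simp only [Gmap, hf1, hf2]
    abel
  have hxy2 : x - y = (∑' k, (f1 x k - f1 y k)) - (a 0 - b 0)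
      - ((∑' k, t1 k) + (∑' k, t2 k)) := by
    rw [hxy, hsplit, Summable.tsum_sub hs1x hs1y]
  -- norm estimates of the three pieces
  set SD : ℝ := ∑' k : ℕ, ‖a (k+1) - b (k+1)‖ / (Nat.factorial k : ℝ) with hSDdef
  set Sb : ℝ := ∑' k : ℕ, ‖b (k+1)‖ / (Nat.factorial k : ℝ) with hSbdef
  have hB1 : ‖∑' k, (f1 x k - f1 y k)‖ ≤ δ / 4 := by
    have hgs := (hasSum_geometric_of_lt_one (r := (1/2:ℝ)) (by norm_num)
      (by norm_num)).mul_left (δ/8)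
    have he : (δ/8) * ((1:ℝ) - 1/2)⁻¹ = δ / 4 := by norm_num; ring
    rw [he] at hgs
    exact tsum_of_norm_bounded hgs key1
  have hB2 : ‖∑' k, t1 k‖ ≤ (1/2) * SD :=
    tsum_of_norm_bounded (hΔ.hasSum.mul_left (1/2)) keyt1
  have hB3 : ‖∑' k, t2 k‖ ≤ (ρ * δ) * Sb :=
    tsum_of_norm_bounded (hb.hasSum.mul_left (ρ * δ)) keyt2
  -- assemble
  have htri : δ ≤ ‖∑' k, (f1 x k - f1 y k)‖ + ‖a 0 - b 0‖ + (‖∑' k, t1 k‖ + ‖∑' k, t2 k‖) := by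
    rw [hδdef]
    conv_lhs => rw [hxy2]
    refine le_trans (norm_sub_le _ _) ?_
    have h1 := norm_sub_le (∑' k, (f1 x k - f1 y k)) (a 0 - b 0)
    have h2 := norm_add_le (∑' k, t1 k) (∑' k, t2 k)
    linarith
  have hSD0 : (0:ℝ) ≤ SD := tsum_nonneg (fun k => by positivity)
  have hSb0 : (0:ℝ) ≤ Sb := tsum_nonneg (fun k => by positivity)
  have hSb : Sb ≤ (4 * ρ)⁻¹ := by
    have h0 : (0:ℝ) ≤ ‖b 0‖ := norm_nonneg _
    rw [gammaNorm] at hγb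
    rw [hSbdef]; linarith
  have hρSb : ρ * δ * Sb ≤ δ / 4 := by
    have h1 : ρ * Sb ≤ ρ * (4 * ρ)⁻¹ := mul_le_mul_of_nonneg_left hSb hρ0
    have h2 : ρ * (4 * ρ)⁻¹ = 1/4 := by field_simp
    nlinarith
  have hgd : gammaNorm (fun k => a k - b k) = ‖a 0 - b 0‖ + SD := rfl
  rw [hgd]
  linarith [hB1, hB2, hB3, htri, hρSb, hSD0]
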